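/- arXiv:2504.15413 — 2 statements merged into one kernel-verified Lean document; each statement's English description precedes it below -/
import Mathlib

section
/- For any partition λ of m, the inversion sign of λ equals the inversion sign of its conjugate: (−1)^λ = (−1)^{λ'}, where (−1)^λ is defined as (−1)^{inv(w)} for the word w = 12…λ_1 12…λ_2 ⋯ 12…λ_ℓ. -/
open Finset

/-- Number of inversions of a word given as a list. -/
def invCount : List ℕ → ℕ
  | [] => 0
  | a :: l => l.countP (fun b => decide (b < a)) + invCount l

/-- Sign of a finite sequence: its permutation sign if it is a permutation of `1,…,k`
(`k` = its length), and `0` otherwise. -/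
def seqSgn (l : List ℕ) : ℤ :=
  if (l : Multiset ℕ) = ((List.range' 1 l.length : List ℕ) : Multiset ℕ) then
    (-1) ^ invCount l
  else 0

/-- Positions (in increasing order) of the letter `i` in the word `s`. -/
def blockList {m : ℕ} (s : Fin m → ℕ) (i : ℕ) : List (Fin m) :=
  (List.finRange m).filter (fun p => decide (s p = i))

/-- The blockwise signature `sgn_s(σ)`: the product over the blocks of `s` of the signs of
`σ` read along the block (in increasing position order). -/
def sgnWord {m : ℕ} (s σ : Fin m → ℕ) : ℤ :=
  ∏ i ∈ Finset.range m, seqSgn ((blockList s (i + 1)).map σ)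

/-- The action of `S_m` on words of length `m` by permuting positions: `(π·t) i = t (π⁻¹ i)`. -/
def pact {m : ℕ} (π : Equiv.Perm (Fin m)) (t : Fin m → ℕ) : Fin m → ℕ :=
  fun p => t (π⁻¹ p)

/-- `w` is a word of weight `L`: the letter `i+1` occurs exactly `L.getD i 0` times. -/
def hasWeight {m : ℕ} (w : Fin m → ℕ) (L : List ℕ) : Prop :=
  ∀ i : ℕ, (Finset.univ.filter (fun p => w p = i + 1)).card = L.getD i 0

/-- `L` is a partition of `m`. -/
def IsPartitionOf (m : ℕ) (L : List ℕ) : Prop :=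
  L.Pairwise (· ≥ ·) ∧ (∀ p ∈ L, 0 < p) ∧ L.sum = m

/-- The conjugate partition, as a list: its `j`-th part is `#{i : L i ≥ j+1}`. -/
def conjList (L : List ℕ) : List ℕ :=
  (List.range (L.headD 0)).map (fun j => L.countP (fun p => decide (j + 1 ≤ p)))

/-- The inversion sign `(−1)^w` of a word. -/
def wordSign {m : ℕ} (w : Fin m → ℕ) : ℤ :=
  (-1) ^ invCount ((List.finRange m).map w)

/-- The inversion sign `(−1)^λ` of a partition: the inversion sign of the word
`1 2 … λ₁ 1 2 … λ₂ ⋯`. -/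
def partSign (L : List ℕ) : ℤ :=
  (-1) ^ invCount ((L.map (fun p => List.range' 1 p)).flatten)

def Nbox (a b : ℕ) : ℕ := ∑ x ∈ Finset.range a, min x b

def Gsum (n : ℕ) (L : List ℕ) : ℕ :=
  ∑ i ∈ Finset.range n, ∑ j ∈ Finset.range n,
    if i < j then Nbox (L.getD i 0) (L.getD j 0) else 0

def Abound (L : List ℕ) : ℕ := L.length + L.sum + 1

def Tset (L : List ℕ) : Finset ((ℕ × ℕ) × (ℕ × ℕ)) :=
  ((Finset.range (Abound L) ×ˢ Finset.range (Abound L)) ×ˢ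
   (Finset.range (Abound L) ×ˢ Finset.range (Abound L))).filter
    (fun q => q.1.1 < q.2.1 ∧ q.2.2 < q.1.2 ∧
      q.1.2 < L.getD q.1.1 0 ∧ q.2.2 < L.getD q.2.1 0)

lemma invCount_append (l l' : List ℕ) :
    invCount (l ++ l') = invCount l + invCount l' +
      (l.map (fun a => l'.countP (fun b => decide (b < a)))).sum := by
  induction l with
  | nil => simp [invCount]
  | cons a l ih =>
    simp only [List.cons_append, invCount, List.countP_append, List.append_eq, ih,
      List.map_cons, List.sum_cons]
    omega

lemma invCount_range' (s n : ℕ) : invCount (List.range' s n) = 0 := by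
  induction n generalizing s with
  | zero => simp [invCount]
  | succ n ih =>
    rw [List.range'_succ]
    have h0 : List.countP (fun b => decide (b < s)) (List.range' (s + 1) n) = 0 := by
      rw [List.countP_eq_zero]
      intro a ha
      rw [List.mem_range'] at ha
      obtain ⟨i, _, rfl⟩ := ha
      simp; omega
    simp [invCount, ih, h0]

lemma countP_lt_range' (x s n : ℕ) :
    List.countP (fun b => decide (b < x)) (List.range' s n) = min (x - s) n := by
  induction n generalizing s with
  | zero => simp
  | succ n ih =>
    rw [List.range'_succ, List.countP_cons, ih]
    by_cases h : s < x <;> simp [h] <;> omega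

lemma sum_map_range' (g : ℕ → ℕ) (s n : ℕ) :
    ((List.range' s n).map g).sum = ∑ i ∈ Finset.range n, g (s + i) := by
  induction n generalizing s with
  | zero => simp
  | succ n ih =>
    rw [List.range'_succ, List.map_cons, List.sum_cons, ih, Finset.sum_range_succ']
    have : ∀ i, s + 1 + i = s + (i + 1) := by omega
    simp [this, Nat.add_comm]

lemma sum_map_getD (h : ℕ → ℕ) (t : List ℕ) :
    (t.map h).sum = ∑ k ∈ Finset.range t.length, h (t.getD k 0) := by
  induction t with
  | nil => simp
  | cons a t ih =>
    rw [List.map_cons, List.sum_cons, ih, List.length_cons, Finset.sum_range_succ']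
    simp [Nat.add_comm]

lemma getD_le_sum (L : List ℕ) (i : ℕ) : L.getD i 0 ≤ L.sum := by
  rcases Nat.lt_or_ge i L.length with h | h
  · have hm : L.getD i 0 ∈ L := by
      rw [List.getD_eq_getElem L 0 h]; exact List.getElem_mem _
    exact List.single_le_sum (by simp) _ hm
  · rw [List.getD_eq_default _ _ h]
    exact Nat.zero_le _

lemma lt_length_of_getD_pos {L : List ℕ} {i : ℕ} (h : 0 < L.getD i 0) : i < L.length := by
  by_contra hc
  rw [List.getD_eq_default _ _ (by omega)] at h
  omega

lemma Nbox_zero (a : ℕ) : Nbox a 0 = 0 := by simp [Nbox]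

lemma Gsum_cons (a : ℕ) (t : List ℕ) (m : ℕ) :
    Gsum (m + 1) (a :: t) = (∑ k ∈ Finset.range m, Nbox a (t.getD k 0)) + Gsum m t := by
  unfold Gsum
  rw [Finset.sum_range_succ']
  have h0 : (∑ j ∈ Finset.range (m + 1),
      if 0 < j then Nbox ((a :: t).getD 0 0) ((a :: t).getD j 0) else 0)
      = ∑ k ∈ Finset.range m, Nbox a (t.getD k 0) := by
    rw [Finset.sum_range_succ']
    simp
  have h1 : ∀ i, (∑ j ∈ Finset.range (m + 1),
      if i + 1 < j then Nbox ((a :: t).getD (i + 1) 0) ((a :: t).getD j 0) else 0)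
      = ∑ j ∈ Finset.range m, if i < j then Nbox (t.getD i 0) (t.getD j 0) else 0 := by
    intro i
    rw [Finset.sum_range_succ']
    simp
  rw [h0, Finset.sum_congr rfl (fun i _ => h1 i)]
  omega

lemma invCount_flatten_eq_G (L : List ℕ) (n : ℕ) (hn : L.length ≤ n) :
    invCount ((L.map (fun p => List.range' 1 p)).flatten) = Gsum n L := by
  induction L generalizing n with
  | nil => simp [invCount, Gsum, Nbox]
  | cons a t ih =>
    obtain ⟨m, rfl⟩ : ∃ m, n = m + 1 := ⟨n - 1, by simp at hn; omega⟩
    have hm : t.length ≤ m := by simp at hn; omega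
    rw [List.map_cons, List.flatten_cons, invCount_append, invCount_range', ih m hm]
    have e1 : ∀ X : ℕ, (List.countP (fun b => decide (b < X))
        ((t.map (fun p => List.range' 1 p)).flatten))
        = (t.map (fun p => min (X - 1) p)).sum := by
      intro X
      rw [List.countP_flatten, List.map_map]
      refine congrArg List.sum (List.map_congr_left fun p _ => ?_)
      exact countP_lt_range' X 1 p
    have hc : ((List.range' 1 a).map (fun X => List.countP (fun b => decide (b < X))
          ((t.map (fun p => List.range' 1 p)).flatten))).sum
        = ∑ k ∈ Finset.range m, Nbox a (t.getD k 0) := by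
      simp only [e1]
      rw [sum_map_range']
      have e2 : ∀ i : ℕ, 1 + i - 1 = i := fun i => by omega
      simp only [e2, sum_map_getD]
      rw [Finset.sum_comm]
      have e3 : ∀ k, (∑ i ∈ Finset.range a, min i (t.getD k 0)) = Nbox a (t.getD k 0) :=
        fun k => rfl
      rw [Finset.sum_congr rfl (fun k _ => e3 k)]
      refine Finset.sum_subset (Finset.range_subset_range.mpr hm) ?_
      intro k _ hk
      rw [List.getD_eq_default _ _ (by simpa using hk), Nbox_zero]
    rw [hc, Gsum_cons]
    omega

lemma min_eq_sum (x b A : ℕ) (hb : b ≤ A) :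
    min x b = ∑ y ∈ Finset.range A, if y < x ∧ y < b then 1 else 0 := by
  rw [← Finset.card_filter]
  have h : (Finset.range A).filter (fun y => y < x ∧ y < b) = Finset.range (min x b) := by
    ext y; simp; omega
  rw [h, Finset.card_range]

lemma Nbox_eq_sum (a b A : ℕ) (ha : a ≤ A) (hb : b ≤ A) :
    Nbox a b = ∑ x ∈ Finset.range A, ∑ y ∈ Finset.range A,
      if x < a ∧ y < x ∧ y < b then 1 else 0 := by
  unfold Nbox
  calc (∑ x ∈ Finset.range a, min x b)
      = ∑ x ∈ Finset.range A, if x < a then min x b else 0 := by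
        rw [← Finset.sum_filter]
        refine Finset.sum_congr ?_ (fun _ _ => rfl)
        ext y; simp; omega
    _ = _ := by
        refine Finset.sum_congr rfl fun x _ => ?_
        by_cases hx : x < a
        · rw [if_pos hx, min_eq_sum x b A hb]
          refine Finset.sum_congr rfl fun y _ => ?_
          simp [hx]
        · simp [hx]

lemma Gsum_eq_card (L : List ℕ) : Gsum (Abound L) L = (Tset L).card := by
  have hA : ∀ i, L.getD i 0 ≤ Abound L := fun i =>
    le_trans (getD_le_sum L i) (by unfold Abound; omega)
  unfold Tset
  rw [Finset.card_filter]
  simp only [Finset.sum_product]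
  unfold Gsum
  refine Finset.sum_congr rfl fun i _ => ?_
  rw [Finset.sum_comm]
  refine Finset.sum_congr rfl fun j _ => ?_
  by_cases hij : i < j
  · rw [if_pos hij, Nbox_eq_sum _ _ _ (hA i) (hA j)]
    refine Finset.sum_congr rfl fun x _ => Finset.sum_congr rfl fun y _ => ?_
    refine if_congr ?_ rfl rfl
    simp [hij]; tauto
  · rw [if_neg hij]
    symm
    refine Finset.sum_eq_zero fun x _ => Finset.sum_eq_zero fun y _ => ?_
    simp [hij]

lemma mem_Tset {L : List ℕ} {q : (ℕ × ℕ) × (ℕ × ℕ)} :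
    q ∈ Tset L ↔ q.1.1 < q.2.1 ∧ q.2.2 < q.1.2 ∧
      q.1.2 < L.getD q.1.1 0 ∧ q.2.2 < L.getD q.2.1 0 := by
  unfold Tset
  rw [Finset.mem_filter]
  constructor
  · tauto
  · intro h
    refine ⟨?_, h⟩
    have h1 : q.1.1 < L.length := lt_length_of_getD_pos (by omega)
    have h2 : q.2.1 < L.length := lt_length_of_getD_pos (by omega)
    have h3 := getD_le_sum L q.1.1
    have h4 := getD_le_sum L q.2.1
    simp only [Finset.mem_product, Finset.mem_range, Abound]
    omega

-- conj section (tested separately)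
lemma le_headD_of_mem {L : List ℕ} (hs : L.Pairwise (· ≥ ·)) {p : ℕ} (hp : p ∈ L) :
    p ≤ L.headD 0 := by
  cases L with
  | nil => simp at hp
  | cons a t =>
    simp only [List.headD_cons]
    rcases List.mem_cons.mp hp with rfl | hp'
    · exact le_refl _
    · exact List.rel_of_pairwise_cons hs hp'

lemma conjList_getD (L : List ℕ) (hs : L.Pairwise (· ≥ ·)) (x : ℕ) :
    (conjList L).getD x 0 = L.countP (fun p => decide (x + 1 ≤ p)) := by
  unfold conjList
  by_cases hx : x < L.headD 0
  · rw [List.getD_eq_getElem _ 0 (by simpa using hx)]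
    simp
  · rw [List.getD_eq_default _ _ (by simpa using hx)]
    symm
    rw [List.countP_eq_zero]
    intro p hp
    have := le_headD_of_mem hs hp
    simp; omega

lemma lt_countP_iff {L : List ℕ} (hs : L.Pairwise (· ≥ ·)) (i x : ℕ) :
    i < L.countP (fun p => decide (x + 1 ≤ p)) ↔ x < L.getD i 0 := by
  induction L generalizing i with
  | nil => simp
  | cons a t ih =>
    have hs' : t.Pairwise (· ≥ ·) := hs.of_cons
    have hzero : ¬ (x + 1 ≤ a) → List.countP (fun p => decide (x + 1 ≤ p)) t = 0 := by
      intro hax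
      rw [List.countP_eq_zero]
      intro p hp
      have := List.rel_of_pairwise_cons hs hp
      simp; omega
    rw [List.countP_cons]
    cases i with
    | zero =>
      simp only [List.getD_cons_zero]
      by_cases hax : x + 1 ≤ a
      · simp [hax]; omega
      · rw [hzero hax]; simp [hax]; omega
    | succ i =>
      rw [List.getD_cons_succ, ← ih hs' i]
      by_cases hax : x + 1 ≤ a
      · simp [hax]
      · rw [hzero hax]; simp [hax]

lemma cell_iff {L : List ℕ} (hs : L.Pairwise (· ≥ ·)) (i x : ℕ) :
    x < L.getD i 0 ↔ i < (conjList L).getD x 0 := by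
  rw [conjList_getD L hs, lt_countP_iff hs]

lemma Tset_card_conj (L : List ℕ) (hs : L.Pairwise (· ≥ ·)) :
    (Tset L).card = (Tset (conjList L)).card := by
  refine Finset.card_bij' (fun q _ => ((q.2.2, q.2.1), (q.1.2, q.1.1)))
    (fun q _ => ((q.2.2, q.2.1), (q.1.2, q.1.1))) ?_ ?_ ?_ ?_
  · intro q hq
    rw [mem_Tset] at hq ⊢
    obtain ⟨h1, h2, h3, h4⟩ := hq
    exact ⟨h2, h1, (cell_iff hs _ _).mp h4, (cell_iff hs _ _).mp h3⟩
  · intro q hq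
    rw [mem_Tset] at hq ⊢
    obtain ⟨h1, h2, h3, h4⟩ := hq
    exact ⟨h2, h1, (cell_iff hs _ _).mpr h4, (cell_iff hs _ _).mpr h3⟩
  · intro q hq; rfl
  · intro q hq; rfl


/-- `(−1)^λ = (−1)^{λ'}` for any partition `λ` of `m`. -/
theorem stmt5 {m : ℕ} (L : List ℕ) (hL : IsPartitionOf m L) :
    partSign L = partSign (conjList L) := by
  obtain ⟨hs, -, -⟩ := hL
  unfold partSign
  rw [invCount_flatten_eq_G L (Abound L) (by unfold Abound; omega),
    invCount_flatten_eq_G (conjList L) (Abound (conjList L)) (by unfold Abound; omega),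
    Gsum_eq_card, Gsum_eq_card, Tset_card_conj L hs]
end

section
/- Interpretation of coefficients as signed fillings: for tables T of weight λ' and S of weight λ, the coefficient a(T,S) = ⟨Δ_T, ⋁ e_S⟩ equals (−1)^T times the signed count Σ_σ sgn(σ) over all (T,S)-fillings σ, i.e. bijections σ from the multiset of columns of T to the multiset of columns of S such that sgn_T(σ(T)) ≠ 0, with sgn(σ) the product over all slices in all d directions of the permutation signs of the induced sequences. -/
open Finset

/-- The signature of a table pair: `sgn_T(X) = ∏ i sgn_{T i}(X i)`. -/
def sgnTbl {d m : ℕ} (T X : Fin d → Fin m → ℕ) : ℤ := ∏ i, sgnWord (T i) (X i)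

/-- The inversion sign `(−1)^T` of a table: the product of the row inversion signs. -/
def tblSign {d m : ℕ} (T : Fin d → Fin m → ℕ) : ℤ := ∏ i, wordSign (T i)

/-- The action of `S_m` on tables by permuting columns. -/
def pactT {d m : ℕ} (π : Equiv.Perm (Fin m)) (T : Fin d → Fin m → ℕ) :
    Fin d → Fin m → ℕ :=
  fun i => pact π (T i)

/-- `‖T‖`: the order of the stabilizer of the table `T` under the column permutation action. -/
noncomputable def stabCard {d m : ℕ} (T : Fin d → Fin m → ℕ) : ℕ :=
  Nat.card {π : Equiv.Perm (Fin m) // pactT π T = T}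

/-- The coefficient `a(T,S) = (−1)^T/(‖T‖·‖S‖) · Σ_{π ∈ S_m} sgn_T(π·S)`. -/
noncomputable def aCoef {d m : ℕ} (T S : Fin d → Fin m → ℕ) : ℚ :=
  (tblSign T : ℚ) / ((stabCard T : ℚ) * (stabCard S : ℚ)) *
    ∑ π : Equiv.Perm (Fin m), (sgnTbl T (pactT π S) : ℚ)

/-- The coefficient `b(S,T) = (−1)^S/‖S‖ · Σ_{π ∈ S_m} sgn(π)·sgn_S(π·T)`. -/
noncomputable def bCoef {d m : ℕ} (S T : Fin d → Fin m → ℕ) : ℚ :=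
  (tblSign S : ℚ) / (stabCard S : ℚ) *
    ∑ π : Equiv.Perm (Fin m),
      ((Equiv.Perm.sign π : ℤ) : ℚ) * (sgnTbl S (pactT π T) : ℚ)

/-- `(−1)^λ` for a `d`-tuple of partitions: the product of the signs of the components. -/
def partSignT {d : ℕ} (Λ : Fin d → List ℕ) : ℤ := ∏ i, partSign (Λ i)

/-- The multiset of columns of a table. -/
def colMS {d m : ℕ} (S : Fin d → Fin m → ℕ) : Multiset (Fin d → ℕ) :=
  Finset.univ.val.map (fun j : Fin m => fun i => S i j)

open scoped Classical in
/-- `(T,S)`-fillings: assignments `c` of a column of `S` to each column of `T` (with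
multiplicity; the entries of a cell of `T` being ordered by position), such that the multiset
of assigned columns equals the multiset of columns of `S`, and in every slice (block of a row
of `T`) the corresponding coordinates form a permutation, i.e. `sgn_T(σ(T)) ≠ 0`. -/
noncomputable def fillingSet {d m : ℕ} (T S : Fin d → Fin m → ℕ) :
    Finset (Fin m → Fin d → Fin (m + 1)) :=
  Finset.univ.filter (fun c =>
    colMS (fun i j => ((c j i : ℕ))) = colMS S ∧
    sgnTbl T (fun i j => (c j i : ℕ)) ≠ 0)


private lemma list_getD_sum (L : List ℕ) :
    ∑ k ∈ Finset.range L.length, L.getD k 0 = L.sum := by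
  induction L with
  | nil => simp
  | cons a L ih =>
    rw [List.length_cons, Finset.sum_range_succ']
    simp only [List.getD_cons_succ, List.getD_cons_zero, List.sum_cons, ih]
    omega

private lemma length_le_sum' (L : List ℕ) (h : ∀ p ∈ L, 0 < p) : L.length ≤ L.sum := by
  induction L with
  | nil => simp
  | cons a L ih =>
    simp only [List.length_cons, List.sum_cons]
    have h1 := h a (by simp)
    have h2 := ih (fun p hp => h p (by simp [hp]))
    omega

private lemma entry_le {m : ℕ} {w : Fin m → ℕ} {L : List ℕ}
    (hw : hasWeight w L) (hL : IsPartitionOf m L) (p : Fin m) : w p ≤ m := by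
  classical
  have hdisj : ∀ k ∈ Finset.range L.length, ∀ l ∈ Finset.range L.length, k ≠ l →
      Disjoint (Finset.univ.filter (fun q => w q = k + 1))
        (Finset.univ.filter (fun q => w q = l + 1)) := by
    intro k _ l _ hkl
    simp only [Finset.disjoint_left, Finset.mem_filter]
    rintro q ⟨_, hq⟩ ⟨_, hq'⟩
    omega
  have hcard : ((Finset.range L.length).biUnion
      (fun k => Finset.univ.filter (fun q => w q = k + 1))).card = m := by
    rw [Finset.card_biUnion hdisj]
    calc ∑ k ∈ Finset.range L.length, (Finset.univ.filter (fun q => w q = k + 1)).card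
        = ∑ k ∈ Finset.range L.length, L.getD k 0 :=
          Finset.sum_congr rfl (fun k _ => hw k)
      _ = L.sum := list_getD_sum L
      _ = m := hL.2.2
  have huniv : ((Finset.range L.length).biUnion
      (fun k => Finset.univ.filter (fun q => w q = k + 1))) = Finset.univ := by
    apply Finset.eq_univ_of_card
    rw [hcard, Fintype.card_fin]
  have hp : p ∈ (Finset.range L.length).biUnion
      (fun k => Finset.univ.filter (fun q => w q = k + 1)) := by
    rw [huniv]; exact Finset.mem_univ p
  obtain ⟨k, hk, hpk⟩ := Finset.mem_biUnion.1 hp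
  rw [Finset.mem_range] at hk
  rw [Finset.mem_filter] at hpk
  have hlen : L.length ≤ L.sum := length_le_sum' L hL.2.1
  have hsum : L.sum = m := hL.2.2
  omega

private lemma exists_perm_of_map_eq {α : Type*} [DecidableEq α] {m : ℕ} {g h : Fin m → α}
    (he : Multiset.map g Finset.univ.val = Multiset.map h Finset.univ.val) :
    ∃ π : Equiv.Perm (Fin m), ∀ x, g x = h (π x) := by
  have key : ∀ (f : Fin m → α) (a : α),
      Fintype.card {x // f x = a} = Multiset.count a (Multiset.map f Finset.univ.val) := by
    intro f a
    rw [Multiset.count_map, Fintype.card_subtype]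
    rw [Finset.card, Finset.filter_val]
    congr 1
    apply Multiset.filter_congr
    intro x _
    exact eq_comm
  have hc : ∀ a, Fintype.card {x // g x = a} = Fintype.card {x // h x = a} := by
    intro a; rw [key, key, he]
  let e : ∀ a, {x // g x = a} ≃ {x // h x = a} := fun a => Fintype.equivOfCardEq (hc a)
  refine ⟨(Equiv.sigmaFiberEquiv g).symm.trans
      ((Equiv.sigmaCongrRight e).trans (Equiv.sigmaFiberEquiv h)), fun x => ?_⟩
  simp only [Equiv.trans_apply]
  have h1 : (Equiv.sigmaFiberEquiv g).symm x = ⟨g x, ⟨x, rfl⟩⟩ := rfl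
  rw [h1]
  have h2 : (Equiv.sigmaCongrRight e) ⟨g x, ⟨x, rfl⟩⟩ = ⟨g x, e (g x) ⟨x, rfl⟩⟩ := rfl
  rw [h2]
  exact ((e (g x)) ⟨x, rfl⟩).2.symm

/-- The coefficient `a(T,S) = ⟨Δ_T, ⋁ e_S⟩` equals `(−1)^T` times the signed
count of `(T,S)`-fillings, where `sgn(σ) = sgn_T(σ(T))` is the product over all slices in all
`d` directions of the signs of the induced sequences (the factor `‖T‖` accounting for the
ordering of the entries within each cell of `T`). -/
theorem stmt16 {d m : ℕ} (Λ : Fin d → List ℕ) (hΛ : ∀ i, IsPartitionOf m (Λ i))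
    (T S : Fin d → Fin m → ℕ)
    (hT : ∀ i, hasWeight (T i) (conjList (Λ i))) (hS : ∀ i, hasWeight (S i) (Λ i)) :
    aCoef T S =
      (tblSign T : ℚ) *
        (∑ c ∈ fillingSet T S, (sgnTbl T (fun i j => (c j i : ℕ)) : ℚ)) /
          (stabCard T : ℚ) := by
  classical
  have hSlt : ∀ (i : Fin d) (j : Fin m), S i j < m + 1 := fun i j =>
    Nat.lt_succ_of_le (entry_le (hS i) (hΛ i) j)
  set F : Equiv.Perm (Fin m) → (Fin m → Fin d → Fin (m + 1)) :=
    fun π j i => ⟨S i (π⁻¹ j), hSlt i (π⁻¹ j)⟩ with hF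
  set s : (Fin m → Fin d → Fin (m + 1)) → ℤ :=
    fun c => sgnTbl T (fun i j => (c j i : ℕ)) with hs
  have hFs : ∀ π : Equiv.Perm (Fin m), sgnTbl T (pactT π S) = s (F π) := by
    intro π
    have h0 : pactT π S = fun i j => ((F π j i : ℕ)) := by
      funext i j; rfl
    show sgnTbl T (pactT π S) = sgnTbl T (fun i j => ((F π j i : ℕ)))
    exact congrArg (sgnTbl T) h0
  -- the stabilizer cardinality as a filter card
  have hstab : stabCard S =
      (Finset.univ.filter (fun σ : Equiv.Perm (Fin m) => pactT σ S = S)).card := by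
    rw [stabCard, Nat.card_eq_fintype_card, Fintype.card_subtype]
  have hSstab0 : 0 < stabCard S := by
    rw [stabCard]
    have : Nonempty {π : Equiv.Perm (Fin m) // pactT π S = S} := by
      refine ⟨⟨1, ?_⟩⟩
      funext i j
      simp [pactT, pact]
    exact Nat.card_pos
  have hTstab0 : 0 < stabCard T := by
    rw [stabCard]
    have : Nonempty {π : Equiv.Perm (Fin m) // pactT π T = T} := by
      refine ⟨⟨1, ?_⟩⟩
      funext i j
      simp [pactT, pact]
    exact Nat.card_pos
  -- fibers of F all have cardinality stabCard S
  have hfiber : ∀ π₀ : Equiv.Perm (Fin m),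
      (Finset.univ.filter (fun π => F π = F π₀)).card = stabCard S := by
    intro π₀
    rw [hstab]
    apply Finset.card_bij (fun (π : Equiv.Perm (Fin m)) _ => π₀⁻¹ * π)
    · intro π hπ
      simp only [Finset.mem_filter, Finset.mem_univ, true_and] at hπ ⊢
      funext i j
      have hv : ((F π (π₀ j) i : ℕ)) = ((F π₀ (π₀ j) i : ℕ)) := by rw [hπ]
      simp only [hF] at hv
      simpa [pactT, pact, mul_inv_rev] using hv
    · intro π₁ h₁ π₂ h₂ hEq
      exact mul_left_cancel hEq
    · intro σ hσ
      simp only [Finset.mem_filter, Finset.mem_univ, true_and] at hσ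
      refine ⟨π₀ * σ, ?_, by group⟩
      simp only [Finset.mem_filter, Finset.mem_univ, true_and]
      funext j i
      apply Fin.ext
      simp only [hF]
      have := congrFun (congrFun hσ i) (π₀⁻¹ j)
      simpa [pactT, pact, mul_inv_rev] using this
  -- the filling set is exactly the image of F restricted to nonzero sign
  have himage : (Finset.univ.image F).filter (fun c => s c ≠ 0)
      = (fillingSet T S).filter (fun c => s c ≠ 0) := by
    ext c
    simp only [Finset.mem_filter, Finset.mem_image, Finset.mem_univ, true_and, fillingSet]
    constructor
    · rintro ⟨⟨π, rfl⟩, hne⟩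
      refine ⟨⟨?_, hne⟩, hne⟩
      show colMS (fun i j => ((F π j i : ℕ))) = colMS S
      have hcol : (fun j : Fin m => fun i => ((F π j i : ℕ)))
          = (fun j : Fin m => fun i => S i j) ∘ ⇑π⁻¹ := by
        funext j i; rfl
      rw [colMS, colMS]
      show Multiset.map (fun j : Fin m => fun i => ((F π j i : ℕ))) _ = _
      rw [hcol]
      have huval : Multiset.map (⇑π⁻¹) Finset.univ.val = Finset.univ.val := by
        have h1 := Finset.map_univ_equiv (π⁻¹ : Fin m ≃ Fin m)
        have := congrArg Finset.val h1
        rwa [Finset.map_val] at this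
      rw [← Multiset.map_map, huval]
    · rintro ⟨⟨hcms, _⟩, hne⟩
      refine ⟨?_, hne⟩
      rw [colMS, colMS] at hcms
      obtain ⟨π, hπ⟩ := exists_perm_of_map_eq
        (g := fun j : Fin m => fun i => ((c j i : ℕ))) (h := fun j : Fin m => fun i => S i j) hcms
      refine ⟨π⁻¹, ?_⟩
      funext j i
      apply Fin.ext
      simp only [hF, inv_inv]
      exact (congrFun (hπ j) i).symm
  -- the key sum identity
  have hsum : ∑ π : Equiv.Perm (Fin m), (sgnTbl T (pactT π S) : ℚ)
      = (stabCard S : ℚ) * ∑ c ∈ fillingSet T S, ((s c : ℤ) : ℚ) := by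
    calc ∑ π : Equiv.Perm (Fin m), (sgnTbl T (pactT π S) : ℚ)
        = ∑ π : Equiv.Perm (Fin m), ((s (F π) : ℤ) : ℚ) := by
          apply Finset.sum_congr rfl
          intro π _
          rw [hFs]
      _ = ∑ c ∈ Finset.univ.image F,
            (Finset.univ.filter (fun π => F π = c)).card • ((s c : ℤ) : ℚ) :=
          Finset.sum_comp (fun c => ((s c : ℤ) : ℚ)) F
      _ = ∑ c ∈ Finset.univ.image F, (stabCard S : ℚ) * ((s c : ℤ) : ℚ) := by
          apply Finset.sum_congr rfl
          intro c hc
          obtain ⟨π₀, _, rfl⟩ := Finset.mem_image.1 hc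
          rw [hfiber π₀, nsmul_eq_mul]
      _ = (stabCard S : ℚ) * ∑ c ∈ Finset.univ.image F, ((s c : ℤ) : ℚ) := by
          rw [Finset.mul_sum]
      _ = (stabCard S : ℚ) * ∑ c ∈ fillingSet T S, ((s c : ℤ) : ℚ) := by
          congr 1
          rw [← Finset.sum_filter_ne_zero (Finset.univ.image F),
            ← Finset.sum_filter_ne_zero (fillingSet T S)]
          have hps : ∀ t : Finset (Fin m → Fin d → Fin (m + 1)),
              t.filter (fun c => ((s c : ℤ) : ℚ) ≠ 0) = t.filter (fun c => s c ≠ 0) := by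
            intro t
            apply Finset.filter_congr
            intro c _
            simp
          rw [hps, hps, himage]
  -- final algebra
  rw [aCoef, hsum]
  have h1 : (stabCard S : ℚ) ≠ 0 := by positivity
  have h2 : (stabCard T : ℚ) ≠ 0 := by positivity
  field_simp
  ring
end
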